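/- Let ξ = (x₀,y₀,1), ν₁ = (x₁,y₁,1), ν₂ = (x₂,y₂,1) be linearly independent vectors in ℝ³ with x₀ > y₀ > 1, with x₁ < 0 or y₁ < 0, and with x₂ < 0 or y₂ < 0. Then the area of the triangle with vertices ξ, ν₁, ν₂ is strictly greater than (1/4)·√(sinSqAngle(ξ, ν₁, ν₂)), and the volume of the tetrahedron with vertices 0, ξ, ν₁, ν₂ is strictly greater than (1/12)·√(sinSqAngle(ξ, ν₁, ν₂)). -/
import Mathlib


set_option maxHeartbeats 1000000

noncomputable section

/-- Cross product on `ℝ³`. -/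
def cross3 (u v : Fin 3 → ℝ) : Fin 3 → ℝ :=
  ![u 1 * v 2 - u 2 * v 1, u 2 * v 0 - u 0 * v 2, u 0 * v 1 - u 1 * v 0]

/-- Squared Euclidean norm on `ℝ³`. -/
def normSq3 (v : Fin 3 → ℝ) : ℝ := v 0 ^ 2 + v 1 ^ 2 + v 2 ^ 2

/-- Squared sine of the angle between the plane spanned by `u, v` and the plane
spanned by `u, w`. -/
def sinSqAngle (u v w : Fin 3 → ℝ) : ℝ :=
  normSq3 (cross3 (cross3 u v) (cross3 u w)) /
    (normSq3 (cross3 u v) * normSq3 (cross3 u w))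

/-- Area of the triangle with vertices `A`, `B`, `C` in `ℝ³`. -/
def triangleArea (A B C : Fin 3 → ℝ) : ℝ :=
  (1 / 2) * Real.sqrt (normSq3 (cross3 (B - A) (C - A)))

/-- Volume of the tetrahedron with vertices `O`, `A`, `B`, `C` in `ℝ³`. -/
def tetraVolume (O A B C : Fin 3 → ℝ) : ℝ :=
  (1 / 6) * |Matrix.det (Matrix.of ![A - O, B - O, C - O])|

/-- If `b₀ > 1` and `b < 0`, the squared distance from `(a, b, 1)` to the line spanned by
`(a₀, b₀, 1)`, scaled by the squared norm of `(a₀, b₀, 1)`, exceeds half that squared norm. -/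
lemma key_lemma (a₀ b₀ a b : ℝ) (hb₀ : 1 < b₀) (hb : b < 0) :
    (a₀^2 + b₀^2 + 1) / 2 <
      (a₀^2 + b₀^2 + 1) * (a^2 + b^2 + 1) - (a₀*a + b₀*b + 1)^2 := by
  have hQ : (0:ℝ) < a₀^2 + b₀^2 + 1 := by positivity
  set Q := a₀^2 + b₀^2 + 1 with hQdef
  set t := (a₀*a + b₀*b + 1)/Q with ht
  have hid : Q*(a^2+b^2+1) - (a₀*a+b₀*b+1)^2
      = Q*((a - t*a₀)^2 + (b - t*b₀)^2 + (1 - t)^2) := by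
    rw [ht, hQdef]; field_simp; ring
  have hs : 1/2 < (a - t*a₀)^2 + (b - t*b₀)^2 + (1 - t)^2 := by
    rcases le_or_gt t 0 with h | h
    · nlinarith [sq_nonneg (a - t*a₀), sq_nonneg (b - t*b₀)]
    · have h2 : t^2 < (b - t*b₀)^2 := by
        nlinarith [mul_pos (show (0:ℝ) < -(b - t*b₀ + t) by nlinarith)
          (show (0:ℝ) < -(b - t*b₀ - t) by nlinarith)]
      nlinarith [sq_nonneg (a - t*a₀), sq_nonneg (2*t - 1)]
  nlinarith [mul_lt_mul_of_pos_left hs hQ]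

/-- The final arithmetic step, abstracted. -/
lemma final_lemma (s n D Q P₁ P₂ : ℝ) (hQ : 1 ≤ Q) (hD : D ≠ 0)
    (hs : s = D^2 * Q / (P₁ * P₂)) (hP₁ : Q/2 < P₁) (hP₂ : Q/2 < P₂)
    (hCS : D^2 ≤ Q * n) :
    (1/4)*Real.sqrt s < (1/2)*Real.sqrt n ∧ (1/12)*Real.sqrt s < (1/6)*|D| := by
  have hQ0 : (0:ℝ) < Q := by linarith
  have hP₁0 : (0:ℝ) < P₁ := by linarith
  have hP₂0 : (0:ℝ) < P₂ := by linarith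
  have hD2 : (0:ℝ) < D^2 := by rcases hD.lt_or_gt with h|h <;> nlinarith
  have hPP : Q^2/4 < P₁ * P₂ := by nlinarith
  have hss : s < 4*D^2/Q := by
    rw [hs, div_lt_div_iff₀ (by positivity) hQ0]
    nlinarith [mul_pos hD2 (show (0:ℝ) < 4*(P₁*P₂) - Q^2 by linarith)]
  have hn0 : (0:ℝ) < n := by nlinarith
  have hs4 : s < 4*n := by
    have : 4*D^2/Q ≤ 4*n := by
      rw [div_le_iff₀ hQ0]; nlinarith
    linarith
  have hsD : s < 4*D^2 := lt_of_lt_of_le hss (div_le_self (by positivity) hQ)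
  constructor
  · have h : Real.sqrt s < 2*Real.sqrt n := by
      rw [Real.sqrt_lt' (by positivity)]
      have e : (2*Real.sqrt n)^2 = 4*n := by
        rw [mul_pow, Real.sq_sqrt hn0.le]; ring
      linarith
    linarith
  · have h : Real.sqrt s < 2*|D| := by
      rw [Real.sqrt_lt' (by positivity)]
      have e : (2*|D|)^2 = 4*D^2 := by rw [mul_pow, sq_abs]; ring
      linarith
    linarith

theorem stmt1 (x₀ y₀ x₁ y₁ x₂ y₂ : ℝ)
    (h01 : x₀ > y₀) (h02 : y₀ > 1)
    (h1 : x₁ < 0 ∨ y₁ < 0) (h2 : x₂ < 0 ∨ y₂ < 0)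
    (hLI : LinearIndependent ℝ ![![x₀, y₀, 1], ![x₁, y₁, 1], ![x₂, y₂, (1 : ℝ)]]) :
    triangleArea ![x₀, y₀, 1] ![x₁, y₁, 1] ![x₂, y₂, 1] >
      (1 / 4) * Real.sqrt (sinSqAngle ![x₀, y₀, 1] ![x₁, y₁, 1] ![x₂, y₂, 1]) ∧
    tetraVolume 0 ![x₀, y₀, 1] ![x₁, y₁, 1] ![x₂, y₂, 1] >
      (1 / 12) * Real.sqrt (sinSqAngle ![x₀, y₀, 1] ![x₁, y₁, 1] ![x₂, y₂, 1]) := by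
  set D : ℝ := x₀*y₁ + x₁*y₂ + x₂*y₀ - x₀*y₂ - x₁*y₀ - x₂*y₁ with hDdef
  have hdet : Matrix.det (Matrix.of ![![x₀, y₀, 1], ![x₁, y₁, 1], ![x₂, y₂, (1:ℝ)]]) = D := by
    rw [Matrix.det_fin_three]; simp [hDdef, Matrix.vecHead, Matrix.vecTail]; ring
  have hD : D ≠ 0 := by
    rw [← hdet]
    exact ((Matrix.isUnit_iff_isUnit_det _).mp
      (Matrix.linearIndependent_rows_iff_isUnit.mp hLI)).ne_zero
  have hnum : normSq3 (cross3 (cross3 ![x₀,y₀,1] ![x₁,y₁,1]) (cross3 ![x₀,y₀,1] ![x₂,y₂,1]))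
      = D^2 * (x₀^2 + y₀^2 + 1) := by
    simp [normSq3, cross3, hDdef]; ring
  have hp1 : normSq3 (cross3 ![x₀,y₀,1] ![x₁,y₁,1])
      = (x₀^2 + y₀^2 + 1) * (x₁^2 + y₁^2 + 1) - (x₀*x₁ + y₀*y₁ + 1)^2 := by
    simp [normSq3, cross3]; ring
  have hp2 : normSq3 (cross3 ![x₀,y₀,1] ![x₂,y₂,1])
      = (x₀^2 + y₀^2 + 1) * (x₂^2 + y₂^2 + 1) - (x₀*x₂ + y₀*y₂ + 1)^2 := by
    simp [normSq3, cross3]; ring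
  have hsin : sinSqAngle ![x₀,y₀,1] ![x₁,y₁,1] ![x₂,y₂,1]
      = D^2 * (x₀^2 + y₀^2 + 1) /
        (((x₀^2 + y₀^2 + 1) * (x₁^2 + y₁^2 + 1) - (x₀*x₁ + y₀*y₁ + 1)^2) *
         ((x₀^2 + y₀^2 + 1) * (x₂^2 + y₂^2 + 1) - (x₀*x₂ + y₀*y₂ + 1)^2)) := by
    rw [sinSqAngle, hnum, hp1, hp2]
  have hCS : D^2 ≤ (x₀^2 + y₀^2 + 1) *
      normSq3 (cross3 (![x₁,y₁,1] - ![x₀,y₀,1]) (![x₂,y₂,1] - ![x₀,y₀,1])) := by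
    have h0 : 0 ≤ normSq3 (cross3 ![x₀,y₀,1]
        (cross3 (![x₁,y₁,1] - ![x₀,y₀,1]) (![x₂,y₂,1] - ![x₀,y₀,1]))) := by
      simp only [normSq3]; positivity
    have hid : (x₀^2 + y₀^2 + 1) *
        normSq3 (cross3 (![x₁,y₁,1] - ![x₀,y₀,1]) (![x₂,y₂,1] - ![x₀,y₀,1])) - D^2
        = normSq3 (cross3 ![x₀,y₀,1]
          (cross3 (![x₁,y₁,1] - ![x₀,y₀,1]) (![x₂,y₂,1] - ![x₀,y₀,1]))) := by
      simp [normSq3, cross3, hDdef]; ring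
    linarith
  have hx₀ : (1:ℝ) < x₀ := by linarith
  have hP₁ : (x₀^2 + y₀^2 + 1)/2 <
      (x₀^2 + y₀^2 + 1) * (x₁^2 + y₁^2 + 1) - (x₀*x₁ + y₀*y₁ + 1)^2 := by
    rcases h1 with hx | hy
    · have := key_lemma y₀ x₀ y₁ x₁ hx₀ hx; linarith [this]
    · exact key_lemma x₀ y₀ x₁ y₁ h02 hy
  have hP₂ : (x₀^2 + y₀^2 + 1)/2 <
      (x₀^2 + y₀^2 + 1) * (x₂^2 + y₂^2 + 1) - (x₀*x₂ + y₀*y₂ + 1)^2 := by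
    rcases h2 with hx | hy
    · have := key_lemma y₀ x₀ y₂ x₂ hx₀ hx; linarith [this]
    · exact key_lemma x₀ y₀ x₂ y₂ h02 hy
  have hQ1 : (1:ℝ) ≤ x₀^2 + y₀^2 + 1 := by nlinarith
  obtain ⟨hA, hV⟩ := final_lemma (sinSqAngle ![x₀,y₀,1] ![x₁,y₁,1] ![x₂,y₂,1])
    (normSq3 (cross3 (![x₁,y₁,1] - ![x₀,y₀,1]) (![x₂,y₂,1] - ![x₀,y₀,1])))
    D (x₀^2 + y₀^2 + 1) _ _ hQ1 hD hsin hP₁ hP₂ hCS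
  constructor
  · exact hA
  · rw [tetraVolume]
    have hdet0 : Matrix.det (Matrix.of ![(![x₀,y₀,1] : Fin 3 → ℝ) - 0,
        ![x₁,y₁,1] - 0, ![x₂,y₂,1] - 0]) = D := by
      simp only [sub_zero]; exact hdet
    rw [hdet0]
    exact hV
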